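/- Let n ≥ 1, L > 0. Let D, J : [0,L] → ℝⁿ be continuous with D_i(x) > 0 and J_i(x) > 0 for all i and x, let S : [0,L] → Sym_n(ℝ) be a continuous symmetric-matrix-valued map, and let λ_m > 0 be such that ξᵀ D(x) S(x) D(x) ξ ≥ λ_m |ξ|² for every x ∈ [0,L] and ξ ∈ ℝⁿ. Let g : L²((0,L);ℝⁿ) → L²((0,L);ℝⁿ) satisfy g(0) = 0 and ‖g(u) − g(v)‖_{L²} ≤ C_g ‖u − v‖_{L²} for all u, v, with some constant C_g ≥ 0. Then for every u ∈ L²((0,L);ℝⁿ), ∫₀ᴸ u(x)ᵀ S(x) u(x) dx + 2∫₀ᴸ u(x)ᵀ J(x)² g(u)(x) dx ≥ (λ_m − 2 C_g · max_{i,x}(D_i(x)J_i(x)²) · max_{i,x} D_i(x)) · ∫₀ᴸ |D(x)⁻¹ u(x)|² dx, where D(x)⁻¹u(x) has components u_i(x)/D_i(x) and J(x)² is the diagonal matrix with entries J_i(x)². -/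

import Mathlib

open MeasureTheory Set Matrix

lemma exists_bound_aux {ι : Type*} [Fintype ι] {s : Set ℝ} (hs : IsCompact s)
    (hne : s.Nonempty) (f : ℝ → ι → ℝ) (hf : ∀ i, ContinuousOn (fun x => f x i) s) :
    ∃ C, 0 ≤ C ∧ ∀ x ∈ s, ∀ i, |f x i| ≤ C := by
  classical
  have hcont : ContinuousOn (fun x => ∑ i, |f x i|) s :=
    continuousOn_finset_sum _ (fun i _ => (hf i).abs)
  obtain ⟨x₁, hx₁, hmax⟩ := hs.exists_isMaxOn hne hcont
  refine ⟨∑ i, |f x₁ i|, Finset.sum_nonneg (fun i _ => abs_nonneg _), fun x hx i => ?_⟩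
  calc |f x i| ≤ ∑ j, |f x j| :=
        Finset.single_le_sum (f := fun j => |f x j|) (fun j _ => abs_nonneg _) (Finset.mem_univ i)
    _ ≤ _ := hmax hx

lemma cs_sum_aux {n : ℕ} (a b : Fin n → ℝ) :
    |∑ i, a i * b i| ≤ Real.sqrt (∑ i, a i ^ 2) * Real.sqrt (∑ i, b i ^ 2) := by
  have h := Finset.sum_mul_sq_le_sq_mul_sq Finset.univ a b
  have h2 : |∑ i, a i * b i| ^ 2 ≤ (∑ i, a i ^ 2) * ∑ i, b i ^ 2 := by rwa [sq_abs]
  calc |∑ i, a i * b i| = Real.sqrt (|∑ i, a i * b i| ^ 2) := by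
        rw [Real.sqrt_sq (abs_nonneg _)]
    _ ≤ Real.sqrt ((∑ i, a i ^ 2) * ∑ i, b i ^ 2) := Real.sqrt_le_sqrt h2
    _ = _ := Real.sqrt_mul (Finset.sum_nonneg fun i _ => sq_nonneg _) _

lemma l2_cs_aux (μ : Measure ℝ) (F G : ℝ → ℝ) (hF : AEMeasurable F μ) (hG : AEMeasurable G μ)
    (hFnn : ∀ x, 0 ≤ F x) (hGnn : ∀ x, 0 ≤ G x)
    (hF2 : Integrable (fun x => F x ^ 2) μ) (hG2 : Integrable (fun x => G x ^ 2) μ) :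
    ∫ x, F x * G x ∂μ ≤ Real.sqrt (∫ x, F x ^ 2 ∂μ) * Real.sqrt (∫ x, G x ^ 2 ∂μ) := by
  have hpq : Real.HolderConjugate 2 2 := ⟨by norm_num, by norm_num, by norm_num⟩
  have hFm : MemLp F (ENNReal.ofReal 2) μ := by
    rw [show ENNReal.ofReal 2 = 2 by simp]
    exact (memLp_two_iff_integrable_sq hF.aestronglyMeasurable).2 hF2
  have hGm : MemLp G (ENNReal.ofReal 2) μ := by
    rw [show ENNReal.ofReal 2 = 2 by simp]
    exact (memLp_two_iff_integrable_sq hG.aestronglyMeasurable).2 hG2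
  have h := integral_mul_le_Lp_mul_Lq_of_nonneg hpq (ae_of_all _ hFnn) (ae_of_all _ hGnn) hFm hGm
  simp only [Real.rpow_two] at h
  calc ∫ x, F x * G x ∂μ ≤ (∫ x, F x ^ 2 ∂μ) ^ (1/(2:ℝ)) * (∫ x, G x ^ 2 ∂μ) ^ (1/(2:ℝ)) := h
    _ = _ := by rw [← Real.sqrt_eq_rpow, ← Real.sqrt_eq_rpow]

theorem stmt_2 (n : ℕ) (hn : 1 ≤ n) (L : ℝ) (hL : 0 < L)
    (D J : ℝ → Fin n → ℝ)
    (hDcont : ∀ i, ContinuousOn (fun x => D x i) (Icc 0 L))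
    (hJcont : ∀ i, ContinuousOn (fun x => J x i) (Icc 0 L))
    (hDpos : ∀ i, ∀ x ∈ Icc (0:ℝ) L, 0 < D x i)
    (hJpos : ∀ i, ∀ x ∈ Icc (0:ℝ) L, 0 < J x i)
    (S : ℝ → Matrix (Fin n) (Fin n) ℝ)
    (hScont : ContinuousOn S (Icc 0 L))
    (hSsymm : ∀ x ∈ Icc (0:ℝ) L, (S x).IsSymm)
    (lam : ℝ) (hlam : 0 < lam)
    (hcoerc : ∀ x ∈ Icc (0:ℝ) L, ∀ ξ : Fin n → ℝ,
      lam * ∑ i, ξ i ^ 2 ≤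
        ξ ⬝ᵥ ((Matrix.diagonal (D x) * S x * Matrix.diagonal (D x)) *ᵥ ξ))
    (g : (ℝ → Fin n → ℝ) → ℝ → Fin n → ℝ)
    (Cg : ℝ) (hCg : 0 ≤ Cg)
    (hg0 : ∀ x, g (fun _ _ => 0) x = fun _ => 0)
    (hgmeas : ∀ u : ℝ → Fin n → ℝ, (∀ i, Measurable fun x => u x i) →
      ∀ i, Measurable fun x => g u x i)
    (hgL2 : ∀ u : ℝ → Fin n → ℝ, (∀ i, Measurable fun x => u x i) →
      IntegrableOn (fun x => ∑ i, (u x i) ^ 2) (Ioo 0 L) →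
      IntegrableOn (fun x => ∑ i, (g u x i) ^ 2) (Ioo 0 L))
    (hglip : ∀ u v : ℝ → Fin n → ℝ,
      (∀ i, Measurable fun x => u x i) → (∀ i, Measurable fun x => v x i) →
      IntegrableOn (fun x => ∑ i, (u x i) ^ 2) (Ioo 0 L) →
      IntegrableOn (fun x => ∑ i, (v x i) ^ 2) (Ioo 0 L) →
      Real.sqrt (∫ x in Ioo 0 L, ∑ i, (g u x i - g v x i) ^ 2)
        ≤ Cg * Real.sqrt (∫ x in Ioo 0 L, ∑ i, (u x i - v x i) ^ 2))
    (u : ℝ → Fin n → ℝ)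
    (humeas : ∀ i, Measurable fun x => u x i)
    (hu2 : IntegrableOn (fun x => ∑ i, (u x i) ^ 2) (Ioo 0 L)) :
    (lam - 2 * Cg * (⨆ p : Fin n × Icc (0:ℝ) L, D (p.2 : ℝ) p.1 * (J (p.2 : ℝ) p.1) ^ 2)
          * (⨆ p : Fin n × Icc (0:ℝ) L, D (p.2 : ℝ) p.1))
        * ∫ x in Ioo 0 L, ∑ i, (u x i / D x i) ^ 2
      ≤ (∫ x in Ioo 0 L, u x ⬝ᵥ (S x *ᵥ u x))
        + 2 * ∫ x in Ioo 0 L, ∑ i, u x i * (J x i) ^ 2 * g u x i := by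
  classical
  have hIccne : (Icc (0:ℝ) L).Nonempty := nonempty_Icc.mpr hL.le
  have h0mem : (0:ℝ) ∈ Icc (0:ℝ) L := ⟨le_rfl, hL.le⟩
  have hsub : Ioo (0:ℝ) L ⊆ Icc 0 L := Ioo_subset_Icc_self
  set i₀ : Fin n := ⟨0, hn⟩
  -- lower bound on D
  obtain ⟨δ, hδpos, hδ⟩ : ∃ δ, 0 < δ ∧ ∀ i, ∀ x ∈ Icc (0:ℝ) L, δ ≤ D x i := by
    have h : ∀ i : Fin n, ∃ δ, 0 < δ ∧ ∀ x ∈ Icc (0:ℝ) L, δ ≤ D x i := by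
      intro i
      obtain ⟨x₀, hx₀, hmin⟩ := isCompact_Icc.exists_isMinOn hIccne (hDcont i)
      exact ⟨D x₀ i, hDpos i x₀ hx₀, fun x hx => hmin hx⟩
    choose δf hδfpos hδf using h
    haveI : Nonempty (Fin n) := ⟨i₀⟩
    refine ⟨Finset.univ.inf' Finset.univ_nonempty δf, ?_, fun i x hx => ?_⟩
    · exact (Finset.lt_inf'_iff _).2 fun i _ => hδfpos i
    · exact le_trans (Finset.inf'_le _ (Finset.mem_univ i)) (hδf i x hx)
  -- upper bounds
  obtain ⟨CD, hCDnn, hCD⟩ := exists_bound_aux isCompact_Icc hIccne D hDcont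
  obtain ⟨CDJ, hCDJnn, hCDJ⟩ := exists_bound_aux isCompact_Icc hIccne
    (fun x i => D x i * J x i ^ 2) (fun i => (hDcont i).mul ((hJcont i).pow 2))
  obtain ⟨MS, hMSnn, hMS⟩ := exists_bound_aux (ι := Fin n × Fin n) isCompact_Icc hIccne
    (fun x p => S x p.1 p.2)
    (fun p => by exact ((continuous_apply p.2).comp (continuous_apply p.1)).comp_continuousOn hScont)
  set M₁ := ⨆ p : Fin n × Icc (0:ℝ) L, D (p.2 : ℝ) p.1 * (J (p.2 : ℝ) p.1) ^ 2 with hM₁def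
  set M₂ := ⨆ p : Fin n × Icc (0:ℝ) L, D (p.2 : ℝ) p.1 with hM₂def
  have hbdd1 : BddAbove (Set.range fun p : Fin n × Icc (0:ℝ) L =>
      D (p.2 : ℝ) p.1 * (J (p.2 : ℝ) p.1) ^ 2) := by
    refine ⟨CDJ, ?_⟩
    rintro y ⟨p, rfl⟩
    exact le_trans (le_abs_self _) (hCDJ _ p.2.2 p.1)
  have hbdd2 : BddAbove (Set.range fun p : Fin n × Icc (0:ℝ) L => D (p.2 : ℝ) p.1) := by
    refine ⟨CD, ?_⟩
    rintro y ⟨p, rfl⟩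
    exact le_trans (le_abs_self _) (hCD _ p.2.2 p.1)
  have hM1le : ∀ x ∈ Icc (0:ℝ) L, ∀ i, D x i * J x i ^ 2 ≤ M₁ := by
    intro x hx i
    rw [hM₁def]
    exact le_ciSup hbdd1 (⟨i, ⟨x, hx⟩⟩ : Fin n × Icc (0:ℝ) L)
  have hM2le : ∀ x ∈ Icc (0:ℝ) L, ∀ i, D x i ≤ M₂ := by
    intro x hx i
    rw [hM₂def]
    exact le_ciSup hbdd2 (⟨i, ⟨x, hx⟩⟩ : Fin n × Icc (0:ℝ) L)
  have hM1nn : 0 ≤ M₁ :=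
    le_trans (mul_nonneg (hDpos i₀ 0 h0mem).le (sq_nonneg _)) (hM1le 0 h0mem i₀)
  have hM2nn : 0 ≤ M₂ := le_trans (hDpos i₀ 0 h0mem).le (hM2le 0 h0mem i₀)
  -- measurability on the restricted measure
  have hDmeas : ∀ i, AEMeasurable (fun x => D x i) (volume.restrict (Ioo 0 L)) :=
    fun i => ((hDcont i).mono hsub).aemeasurable measurableSet_Ioo
  have hJmeas : ∀ i, AEMeasurable (fun x => J x i) (volume.restrict (Ioo 0 L)) :=
    fun i => ((hJcont i).mono hsub).aemeasurable measurableSet_Ioo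
  have hξmeas : ∀ i, AEMeasurable (fun x => u x i / D x i) (volume.restrict (Ioo 0 L)) :=
    fun i => (humeas i).aemeasurable.div (hDmeas i)
  have hξsummeas : AEMeasurable (fun x => ∑ i, (u x i / D x i) ^ 2)
      (volume.restrict (Ioo 0 L)) :=
    Finset.aemeasurable_fun_sum _ (fun i _ => (hξmeas i).pow aemeasurable_const)
  have hgm : ∀ i, Measurable fun x => g u x i := hgmeas u humeas
  have hgsummeas : AEMeasurable (fun x => ∑ i, (g u x i) ^ 2)
      (volume.restrict (Ioo 0 L)) :=
    Finset.aemeasurable_fun_sum _ (fun i _ => ((hgm i).aemeasurable).pow aemeasurable_const)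
  -- integrability of ∑ ξ²
  have hξ2 : IntegrableOn (fun x => ∑ i, (u x i / D x i) ^ 2) (Ioo 0 L) := by
    refine Integrable.mono' (hu2.const_mul (δ⁻¹ ^ 2)) hξsummeas.aestronglyMeasurable ?_
    rw [ae_restrict_iff' measurableSet_Ioo]
    refine ae_of_all _ fun x hx => ?_
    rw [Real.norm_of_nonneg (Finset.sum_nonneg fun i _ => sq_nonneg _), Finset.mul_sum]
    refine Finset.sum_le_sum fun i _ => ?_
    have hDx := hδ i x (hsub hx)
    have h1 : (u x i / D x i) ^ 2 ≤ u x i ^ 2 / δ ^ 2 := by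
      rw [div_pow]
      exact div_le_div_of_nonneg_left (sq_nonneg _) (by positivity)
        (by nlinarith)
    calc (u x i / D x i) ^ 2 ≤ u x i ^ 2 / δ ^ 2 := h1
      _ = δ⁻¹ ^ 2 * u x i ^ 2 := by rw [inv_pow, div_eq_mul_inv, mul_comm]
  set A := ∫ x in Ioo 0 L, ∑ i, (u x i / D x i) ^ 2 with hAdef
  have hAnn : 0 ≤ A :=
    setIntegral_nonneg measurableSet_Ioo (fun x _ => Finset.sum_nonneg fun i _ => sq_nonneg _)
  have hg2 : IntegrableOn (fun x => ∑ i, (g u x i) ^ 2) (Ioo 0 L) := hgL2 u humeas hu2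
  set B := ∫ x in Ioo 0 L, ∑ i, (g u x i) ^ 2 with hBdef
  have hBnn : 0 ≤ B :=
    setIntegral_nonneg measurableSet_Ioo (fun x _ => Finset.sum_nonneg fun i _ => sq_nonneg _)
  -- Lipschitz estimate at 0 : √B ≤ Cg √(∫ ∑ u²)
  have hsqB : Real.sqrt B ≤ Cg * Real.sqrt (∫ x in Ioo 0 L, ∑ i, u x i ^ 2) := by
    have h0m : ∀ i, Measurable fun x => (fun (_ : ℝ) (_ : Fin n) => (0:ℝ)) x i :=
      fun i => measurable_const
    have h0int : IntegrableOn
        (fun x => ∑ i : Fin n, ((fun (_ : ℝ) (_ : Fin n) => (0:ℝ)) x i) ^ 2) (Ioo 0 L) := by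
      simpa using (integrableOn_const (C := (0:ℝ))).2 (Or.inl rfl)
    have hl := hglip u (fun _ _ => 0) humeas h0m hu2 h0int
    simpa only [hg0, sub_zero] using hl
  -- ∫ ∑ u² ≤ M₂² A
  have huA : ∫ x in Ioo 0 L, ∑ i, u x i ^ 2 ≤ M₂ ^ 2 * A := by
    have hpt : ∀ x ∈ Ioo (0:ℝ) L, ∑ i, u x i ^ 2 ≤ M₂ ^ 2 * ∑ i, (u x i / D x i) ^ 2 := by
      intro x hx
      rw [Finset.mul_sum]
      refine Finset.sum_le_sum fun i _ => ?_
      have hDne : D x i ≠ 0 := (hDpos i x (hsub hx)).ne'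
      have hui : u x i / D x i * D x i = u x i := div_mul_cancel₀ _ hDne
      have hDle : D x i ^ 2 ≤ M₂ ^ 2 := by
        have := hM2le x (hsub hx) i
        nlinarith [(hDpos i x (hsub hx)).le]
      calc u x i ^ 2 = (u x i / D x i) ^ 2 * D x i ^ 2 := by rw [← mul_pow, hui]
        _ ≤ (u x i / D x i) ^ 2 * M₂ ^ 2 := by
            exact mul_le_mul_of_nonneg_left hDle (sq_nonneg _)
        _ = M₂ ^ 2 * (u x i / D x i) ^ 2 := by ring
    calc ∫ x in Ioo 0 L, ∑ i, u x i ^ 2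
        ≤ ∫ x in Ioo 0 L, M₂ ^ 2 * ∑ i, (u x i / D x i) ^ 2 :=
          setIntegral_mono_on hu2 (hξ2.const_mul _) measurableSet_Ioo hpt
      _ = M₂ ^ 2 * A := by rw [integral_const_mul]
  have hsqB' : Real.sqrt B ≤ Cg * (M₂ * Real.sqrt A) := by
    refine hsqB.trans (mul_le_mul_of_nonneg_left ?_ hCg)
    calc Real.sqrt (∫ x in Ioo 0 L, ∑ i, u x i ^ 2) ≤ Real.sqrt (M₂ ^ 2 * A) :=
          Real.sqrt_le_sqrt huA
      _ = M₂ * Real.sqrt A := by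
          rw [Real.sqrt_mul (sq_nonneg _), Real.sqrt_sq hM2nn]
  -- pointwise bound on the quadratic form
  have hpointS : ∀ x ∈ Icc (0:ℝ) L, |u x ⬝ᵥ (S x *ᵥ u x)| ≤ MS * n * ∑ i, u x i ^ 2 := by
    intro x hx
    have h2 : (∑ i, |u x i|) ^ 2 ≤ (n : ℝ) * ∑ i, u x i ^ 2 := by
      have hcs := Finset.sum_mul_sq_le_sq_mul_sq Finset.univ (fun i => |u x i|) (fun _ => (1:ℝ))
      simp only [mul_one, one_pow, sq_abs, Finset.sum_const, Finset.card_univ,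
        Fintype.card_fin, nsmul_eq_mul] at hcs
      linarith [hcs]
    calc |u x ⬝ᵥ (S x *ᵥ u x)| = |∑ i, u x i * ∑ j, S x i j * u x j| := by
          simp only [dotProduct, Matrix.mulVec, dotProduct]
      _ ≤ ∑ i, |u x i * ∑ j, S x i j * u x j| := Finset.abs_sum_le_sum_abs _ _
      _ ≤ ∑ i, |u x i| * ∑ j, MS * |u x j| := by
          refine Finset.sum_le_sum fun i _ => ?_
          rw [abs_mul]
          refine mul_le_mul_of_nonneg_left ?_ (abs_nonneg _)
          calc |∑ j, S x i j * u x j| ≤ ∑ j, |S x i j * u x j| :=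
                Finset.abs_sum_le_sum_abs _ _
            _ ≤ ∑ j, MS * |u x j| := by
                refine Finset.sum_le_sum fun j _ => ?_
                rw [abs_mul]
                exact mul_le_mul_of_nonneg_right (hMS x hx (i, j)) (abs_nonneg _)
      _ = (∑ i, |u x i|) * (MS * ∑ j, |u x j|) := by rw [← Finset.mul_sum, ← Finset.sum_mul]
      _ = MS * (∑ i, |u x i|) ^ 2 := by ring
      _ ≤ MS * ((n : ℝ) * ∑ i, u x i ^ 2) := mul_le_mul_of_nonneg_left h2 hMSnn
      _ = MS * n * ∑ i, u x i ^ 2 := by ring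
  have hSmeas : AEMeasurable (fun x => u x ⬝ᵥ (S x *ᵥ u x)) (volume.restrict (Ioo 0 L)) := by
    have : ∀ i j, AEMeasurable (fun x => S x i j) (volume.restrict (Ioo 0 L)) := fun i j => by
      exact ((((continuous_apply j).comp (continuous_apply i)).comp_continuousOn hScont).mono
        hsub).aemeasurable measurableSet_Ioo
    simp only [dotProduct, Matrix.mulVec, dotProduct]
    exact Finset.aemeasurable_fun_sum _ fun i _ =>
      (humeas i).aemeasurable.mul
        (Finset.aemeasurable_fun_sum _ fun j _ => (this i j).mul (humeas j).aemeasurable)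
  have hSint : IntegrableOn (fun x => u x ⬝ᵥ (S x *ᵥ u x)) (Ioo 0 L) := by
    refine Integrable.mono' (hu2.const_mul (MS * n)) hSmeas.aestronglyMeasurable ?_
    rw [ae_restrict_iff' measurableSet_Ioo]
    exact ae_of_all _ fun x hx => by
      rw [Real.norm_eq_abs]; exact hpointS x (hsub hx)
  -- first term lower bound : lam * A ≤ ∫ uᵀ S u
  have hmat : ∀ x ∈ Icc (0:ℝ) L,
      (Matrix.diagonal (D x) *ᵥ fun i => u x i / D x i) = u x := by
    intro x hx
    funext i
    rw [Matrix.mulVec_diagonal, mul_comm]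
    exact div_mul_cancel₀ _ (hDpos i x hx).ne'
  have h1 : lam * A ≤ ∫ x in Ioo 0 L, u x ⬝ᵥ (S x *ᵥ u x) := by
    have hpt : ∀ x ∈ Ioo (0:ℝ) L,
        lam * ∑ i, (u x i / D x i) ^ 2 ≤ u x ⬝ᵥ (S x *ᵥ u x) := by
      intro x hx
      have hxI := hsub hx
      have hc := hcoerc x hxI (fun i => u x i / D x i)
      refine hc.trans_eq ?_
      rw [← Matrix.mulVec_mulVec, ← Matrix.mulVec_mulVec, hmat x hxI]
      simp only [dotProduct, Matrix.mulVec_diagonal]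
      refine Finset.sum_congr rfl fun i _ => ?_
      have hui : D x i * (u x i / D x i) = u x i := by
        rw [mul_comm]; exact div_mul_cancel₀ _ (hDpos i x hxI).ne'
      calc u x i / D x i * (D x i * (S x *ᵥ u x) i)
          = D x i * (u x i / D x i) * (S x *ᵥ u x) i := by ring
        _ = u x i * (S x *ᵥ u x) i := by rw [hui]
    calc lam * A = ∫ x in Ioo 0 L, lam * ∑ i, (u x i / D x i) ^ 2 := by
          rw [integral_const_mul]
      _ ≤ _ := setIntegral_mono_on (hξ2.const_mul _) hSint measurableSet_Ioo hpt
  -- second term bound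
  set F := fun x => Real.sqrt (∑ i, (u x i / D x i) ^ 2) with hFdef
  set G := fun x => Real.sqrt (∑ i, (g u x i) ^ 2) with hGdef
  have hFmeas : AEMeasurable F (volume.restrict (Ioo 0 L)) :=
    Real.continuous_sqrt.measurable.comp_aemeasurable hξsummeas
  have hGmeas : AEMeasurable G (volume.restrict (Ioo 0 L)) :=
    Real.continuous_sqrt.measurable.comp_aemeasurable hgsummeas
  have hF2eq : (fun x => F x ^ 2) = fun x => ∑ i, (u x i / D x i) ^ 2 :=
    funext fun x => Real.sq_sqrt (Finset.sum_nonneg fun i _ => sq_nonneg _)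
  have hG2eq : (fun x => G x ^ 2) = fun x => ∑ i, (g u x i) ^ 2 :=
    funext fun x => Real.sq_sqrt (Finset.sum_nonneg fun i _ => sq_nonneg _)
  have hF2 : Integrable (fun x => F x ^ 2) (volume.restrict (Ioo 0 L)) := by
    rw [hF2eq]; exact hξ2
  have hG2 : Integrable (fun x => G x ^ 2) (volume.restrict (Ioo 0 L)) := by
    rw [hG2eq]; exact hg2
  have hFGint : Integrable (fun x => F x * G x) (volume.restrict (Ioo 0 L)) := by
    refine Integrable.mono' ((hF2.add hG2).div_const 2)
      (hFmeas.mul hGmeas).aestronglyMeasurable (ae_of_all _ fun x => ?_)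
    rw [Real.norm_of_nonneg (mul_nonneg (Real.sqrt_nonneg _) (Real.sqrt_nonneg _))]
    have e1 : F x ^ 2 = ∑ i, (u x i / D x i) ^ 2 := congrFun hF2eq x
    have e2 : G x ^ 2 = ∑ i, (g u x i) ^ 2 := congrFun hG2eq x
    show F x * G x ≤ (F x ^ 2 + G x ^ 2) / 2
    nlinarith [sq_nonneg (F x - G x)]
  have hTpoint : ∀ x ∈ Ioo (0:ℝ) L,
      |∑ i, u x i * J x i ^ 2 * g u x i| ≤ M₁ * (F x * G x) := by
    intro x hx
    have hxI := hsub hx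
    have hcs : ∑ i, |u x i / D x i| * |g u x i| ≤ F x * G x := by
      have h := cs_sum_aux (fun i => |u x i / D x i|) (fun i => |g u x i|)
      simp only [sq_abs] at h
      exact le_trans (le_abs_self _) h
    calc |∑ i, u x i * J x i ^ 2 * g u x i|
        ≤ ∑ i, |u x i * J x i ^ 2 * g u x i| := Finset.abs_sum_le_sum_abs _ _
      _ ≤ ∑ i, M₁ * (|u x i / D x i| * |g u x i|) := by
          refine Finset.sum_le_sum fun i _ => ?_
          have hui : u x i = D x i * (u x i / D x i) := by
            rw [mul_comm]; exact (div_mul_cancel₀ _ (hDpos i x hxI).ne').symm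
          calc |u x i * J x i ^ 2 * g u x i|
              = (D x i * J x i ^ 2) * (|u x i / D x i| * |g u x i|) := by
                conv_lhs => rw [hui]
                rw [abs_mul, abs_mul, abs_mul, abs_of_nonneg (hDpos i x hxI).le,
                  abs_of_nonneg (sq_nonneg (J x i))]
                ring
            _ ≤ M₁ * (|u x i / D x i| * |g u x i|) :=
                mul_le_mul_of_nonneg_right (hM1le x hxI i)
                  (mul_nonneg (abs_nonneg _) (abs_nonneg _))
      _ = M₁ * ∑ i, |u x i / D x i| * |g u x i| := by rw [Finset.mul_sum]
      _ ≤ M₁ * (F x * G x) := mul_le_mul_of_nonneg_left hcs hM1nn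
  have hTmeas : AEMeasurable (fun x => ∑ i, u x i * J x i ^ 2 * g u x i)
      (volume.restrict (Ioo 0 L)) :=
    Finset.aemeasurable_fun_sum _ fun i _ =>
      ((humeas i).aemeasurable.mul ((hJmeas i).pow aemeasurable_const)).mul
        (hgm i).aemeasurable
  have hTint : IntegrableOn (fun x => ∑ i, u x i * J x i ^ 2 * g u x i) (Ioo 0 L) := by
    refine Integrable.mono' (hFGint.const_mul M₁) hTmeas.aestronglyMeasurable ?_
    rw [ae_restrict_iff' measurableSet_Ioo]
    exact ae_of_all _ fun x hx => by
      rw [Real.norm_eq_abs]; exact hTpoint x hx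
  set T := ∫ x in Ioo 0 L, ∑ i, u x i * J x i ^ 2 * g u x i with hTdef
  have hTabs : |T| ≤ Cg * M₁ * M₂ * A := by
    have hstep1 : |T| ≤ ∫ x in Ioo 0 L, M₁ * (F x * G x) := by
      rw [hTdef]
      calc |∫ x in Ioo 0 L, ∑ i, u x i * J x i ^ 2 * g u x i|
          ≤ ∫ x in Ioo 0 L, |∑ i, u x i * J x i ^ 2 * g u x i| := by
            simpa [Real.norm_eq_abs] using
              norm_integral_le_integral_norm (μ := volume.restrict (Ioo 0 L))
                (f := fun x => ∑ i, u x i * J x i ^ 2 * g u x i)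
        _ ≤ _ := by
            refine integral_mono_of_nonneg (ae_of_all _ fun x => abs_nonneg _)
              (hFGint.const_mul M₁) ?_
            filter_upwards [ae_restrict_mem measurableSet_Ioo] with x hx using hTpoint x hx
    have hstep2 : ∫ x in Ioo 0 L, M₁ * (F x * G x) ≤ M₁ * (Real.sqrt A * Real.sqrt B) := by
      rw [integral_const_mul]
      refine mul_le_mul_of_nonneg_left ?_ hM1nn
      have := l2_cs_aux (volume.restrict (Ioo 0 L)) F G hFmeas hGmeas
        (fun x => Real.sqrt_nonneg _) (fun x => Real.sqrt_nonneg _) hF2 hG2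
      rw [hF2eq, hG2eq] at this
      rw [hAdef, hBdef]
      exact this
    have hstep3 : M₁ * (Real.sqrt A * Real.sqrt B) ≤ Cg * M₁ * M₂ * A := by
      calc M₁ * (Real.sqrt A * Real.sqrt B)
          ≤ M₁ * (Real.sqrt A * (Cg * (M₂ * Real.sqrt A))) := by
            exact mul_le_mul_of_nonneg_left
              (mul_le_mul_of_nonneg_left hsqB' (Real.sqrt_nonneg _)) hM1nn
        _ = Cg * M₁ * M₂ * (Real.sqrt A * Real.sqrt A) := by ring
        _ = Cg * M₁ * M₂ * A := by rw [Real.mul_self_sqrt hAnn]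
    linarith
  have hTlow : -(Cg * M₁ * M₂ * A) ≤ T := by
    have := neg_abs_le T
    linarith [hTabs]
  nlinarith [h1, hTlow]
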